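/- Let X be a real infinite-dimensional Banach space with a boundedly complete Schauder basis (x_n)_{n=1}^∞ with basis constant K, coordinate functionals (x*_n) and V the closed linear span of {x*_n : n ∈ ℕ} in X*. Then wck_X(B_X) ≤ (K+1)·d̂(B_{X*}, V). -/

import Mathlib

open Filter Metric NormedSpace Set Topology

noncomputable section

variable {E : Type*} [NormedAddCommGroup E] [NormedSpace ℝ E]

/-- `f` is the sequence of coordinate functionals of the Schauder basis `x`:
every vector has an expansion along `x`, and such expansions are unique. -/
structure IsSchauderBasis (x : ℕ → E) (f : ℕ → E →L[ℝ] ℝ) : Prop where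
  expand : ∀ v : E,
    Tendsto (fun n => ∑ i ∈ Finset.range n, f i v • x i) atTop (𝓝 v)
  unique : ∀ (a : ℕ → ℝ) (v : E),
    Tendsto (fun n => ∑ i ∈ Finset.range n, a i • x i) atTop (𝓝 v) → ∀ i, a i = f i v

/-- the `n`-th basis projection `P_n`. -/
def basisProj (x : ℕ → E) (f : ℕ → E →L[ℝ] ℝ) (n : ℕ) : E →L[ℝ] E :=
  ∑ i ∈ Finset.range n, (f i).smulRight (x i)

/-- closed linear span of `{y i : i ≥ n}`. -/
def tailSpan (y : ℕ → E) (n : ℕ) : Submodule ℝ E :=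
  (Submodule.span ℝ (y '' {i | n ≤ i})).topologicalClosure

/-- `‖g‖_n` : the norm of the restriction of `g` to the closed span of the tail of `y`. -/
def tailNorm (y : ℕ → E) (g : E →L[ℝ] ℝ) (n : ℕ) : ℝ :=
  ‖g.comp (tailSpan y n).subtypeL‖

/-- the quantity `sh` measuring how far a basic sequence is from being shrinking. -/
def sh (y : ℕ → E) : ℝ :=
  sSup ((fun g : E →L[ℝ] ℝ => limsup (tailNorm y g) atTop) '' {g | ‖g‖ ≤ 1})

/-- non-symmetrised Hausdorff distance `d̂(A,B)`. -/
def hdist (A B : Set E) : ℝ := sSup ((fun a => infDist a B) '' A)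

/-- ordinary distance between two sets. -/
def setDist (A B : Set E) : ℝ := sInf {d : ℝ | ∃ a ∈ A, ∃ b ∈ B, d = dist a b}

/-- `ca` measures how far a sequence is from being norm-Cauchy. -/
def ca (z : ℕ → E) : ℝ :=
  ⨅ n : ℕ, sSup {d : ℝ | ∃ k, n ≤ k ∧ ∃ l, n ≤ l ∧ d = ‖z k - z l‖}

/-- measure of non-separability. -/
def sep (A : Set E) : ℝ :=
  sInf {ε : ℝ | 0 < ε ∧ ∃ C : Set E, C.Countable ∧ ∀ a ∈ A, ∃ c ∈ C, ‖a - c‖ ≤ ε}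

/-- `V`: the closed linear span of the coordinate functionals. -/
def dualSpan (g : ℕ → E →L[ℝ] ℝ) : Submodule ℝ (StrongDual ℝ E) :=
  (Submodule.span ℝ (Set.range g)).topologicalClosure

lemma mem_dualSpan (g : ℕ → E →L[ℝ] ℝ) (i : ℕ) : g i ∈ dualSpan g :=
  Submodule.le_topologicalClosure _ (Submodule.subset_span ⟨i, rfl⟩)

/-- the quantity `bc₁` measuring non-bounded-completeness. -/
def bc1 (y : ℕ → E) : ℝ :=
  sSup {c : ℝ | ∃ a : ℕ → ℝ,
    (∀ n, ‖∑ i ∈ Finset.range n, a i • y i‖ ≤ 1) ∧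
    c = ca (fun n => ∑ i ∈ Finset.range n, a i • y i)}

/-- the quantity `bc₂`. -/
def bc2 (y : ℕ → E) (g : ℕ → E →L[ℝ] ℝ) : ℝ :=
  sSup {c : ℝ | ∃ φ : ↥(dualSpan g) →L[ℝ] ℝ,
    @Norm.norm _ (@ContinuousLinearMap.hasOpNorm ℝ ℝ (dualSpan g) ℝ _ _ _ _ _ _ (RingHom.id ℝ)) φ ≤ 1 ∧
    c = ca (fun n => ∑ i ∈ Finset.range n, φ ⟨g i, mem_dualSpan g i⟩ • y i)}

/-- the quantity `bc₃`. -/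
def bc3 (y : ℕ → E) (g : ℕ → E →L[ℝ] ℝ) : ℝ :=
  sSup {c : ℝ | ∃ Φ : StrongDual ℝ (StrongDual ℝ E), ‖Φ‖ ≤ 1 ∧
    c = ca (fun n => ∑ i ∈ Finset.range n, Φ (g i) • y i)}

/-- `α_Y(X)`: measures how well `Y` embeds isomorphically into `X`. -/
def alpha (Y X : Type*) [NormedAddCommGroup Y] [NormedSpace ℝ Y]
    [NormedAddCommGroup X] [NormedSpace ℝ X] : ℝ :=
  sSup {c : ℝ | ∃ T : Y →L[ℝ] X, ‖T‖ ≤ 1 ∧ ∀ y : Y, c * ‖y‖ ≤ ‖T y‖}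

/-- `β_Y(X)`: measures how well `Y` embeds complementably into `X`. -/
def beta (Y X : Type*) [NormedAddCommGroup Y] [NormedSpace ℝ Y]
    [NormedAddCommGroup X] [NormedSpace ℝ X] : ℝ :=
  sSup {c : ℝ | ∃ (A : X →L[ℝ] Y) (B : Y →L[ℝ] X),
    A.comp B = ContinuousLinearMap.id ℝ Y ∧ c * (‖A‖ * ‖B‖) ≤ 1}

/-- weak-star closure of a subset of the bidual. -/
def wstarClosure {X : Type*} [NormedAddCommGroup X] [NormedSpace ℝ X]
    (S : Set (StrongDual ℝ (StrongDual ℝ X))) : Set (StrongDual ℝ (StrongDual ℝ X)) :=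
  {z | StrongDual.toWeakDual z ∈ closure (StrongDual.toWeakDual '' S)}

/-- the measure of weak non-compactness `wk_X(A)`. -/
def wk (X : Type*) [NormedAddCommGroup X] [NormedSpace ℝ X] (A : Set X) : ℝ :=
  hdist (wstarClosure ((inclusionInDoubleDual ℝ X) '' A))
    (Set.range (inclusionInDoubleDual ℝ X))

/-- weak-star cluster points in the bidual of a sequence in `X`. -/
def wclust {X : Type*} [NormedAddCommGroup X] [NormedSpace ℝ X] (u : ℕ → X) :
    Set (StrongDual ℝ (StrongDual ℝ X)) :=
  {z | MapClusterPt (StrongDual.toWeakDual z) atTop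
      (fun n => StrongDual.toWeakDual (inclusionInDoubleDual ℝ X (u n)))}

/-- the measure of weak non-compactness `wck_X(A)`. -/
def wck (X : Type*) [NormedAddCommGroup X] [NormedSpace ℝ X] (A : Set X) : ℝ :=
  sSup {c : ℝ | ∃ u : ℕ → X, (∀ n, u n ∈ A) ∧
    c = setDist (wclust u) (Set.range (inclusionInDoubleDual ℝ X))}


/-- the canonical map `j : X → V*` for a subspace `V` of the dual,
`⟨j v, x*⟩ = x*(v)`. -/
def jfun {X : Type*} [NormedAddCommGroup X] [NormedSpace ℝ X]
    (V : Submodule ℝ (StrongDual ℝ X)) (v : X) : ↥V →L[ℝ] ℝ :=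
  (inclusionInDoubleDual ℝ X v).comp V.subtypeL

/-- the space `ℓ₁` of absolutely summable real sequences. -/
abbrev ell1 : Type := lp (fun _ : ℕ => ℝ) 1

/-- the space `c₀` of real sequences converging to zero, with the sup norm. -/
abbrev czero : Type := ZeroAtInftyContinuousMap ℕ ℝ

end

/-- Theorem 5.2(1): if the basis is boundedly complete then
`wck_X(B_X) ≤ (K+1)·d̂(B_{X*}, V)`. -/
theorem wck_le_hdist_of_boundedlyComplete {X : Type*} [NormedAddCommGroup X]
    [NormedSpace ℝ X] [CompleteSpace X] (hinf : ¬ FiniteDimensional ℝ X)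
    (x : ℕ → X) (f : ℕ → X →L[ℝ] ℝ) (hb : IsSchauderBasis x f)
    (K : ℝ) (hK : K = ⨆ n : ℕ, ‖basisProj x f n‖)
    (hbdd : ∀ a : ℕ → ℝ, (∃ C : ℝ, ∀ n, ‖∑ i ∈ Finset.range n, a i • x i‖ ≤ C) →
      ∃ v : X, Filter.Tendsto (fun n => ∑ i ∈ Finset.range n, a i • x i)
        Filter.atTop (nhds v)) :
    wck X (Metric.closedBall (0 : X) 1) ≤
      (K + 1) * hdist (Metric.closedBall (0 : StrongDual ℝ X) 1) (dualSpan f : Set (StrongDual ℝ X)) := by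
  classical
  set j := inclusionInDoubleDual ℝ X with hj
  set V : Submodule ℝ (StrongDual ℝ X) := dualSpan f with hV
  set r : ℝ := hdist (Metric.closedBall (0 : StrongDual ℝ X) 1) (V : Set (StrongDual ℝ X)) with hr
  -- Banach-Steinhaus: the basis projections are uniformly bounded
  obtain ⟨C, hC⟩ : ∃ C, ∀ n, ‖basisProj x f n‖ ≤ C := by
    apply banach_steinhaus
    intro v
    have hPv : ∀ n, basisProj x f n v = ∑ i ∈ Finset.range n, f i v • x i := by
      intro n
      simp [basisProj, ContinuousLinearMap.sum_apply]
    have ht : Filter.Tendsto (fun n => ‖basisProj x f n v‖) Filter.atTop (nhds ‖v‖) := by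
      have := (hb.expand v).norm
      simpa [hPv] using this
    obtain ⟨C, hC⟩ := ht.bddAbove_range
    exact ⟨C, fun n => hC ⟨n, rfl⟩⟩
  have hKbdd : BddAbove (Set.range fun n => ‖basisProj x f n‖) :=
    ⟨C, by rintro _ ⟨n, rfl⟩; exact hC n⟩
  have hKge : ∀ n, ‖basisProj x f n‖ ≤ K := by
    intro n; rw [hK]; exact le_ciSup hKbdd n
  have hK0 : 0 ≤ K := le_trans (norm_nonneg _) (hKge 0)
  -- r is nonneg and dominates infDist for unit ball elements
  have h0V : (0 : StrongDual ℝ X) ∈ (V : Set (StrongDual ℝ X)) := V.zero_mem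
  have hVne : (V : Set (StrongDual ℝ X)).Nonempty := ⟨0, h0V⟩
  have hbddr : BddAbove ((fun a => Metric.infDist a (V : Set (StrongDual ℝ X))) ''
      Metric.closedBall (0 : StrongDual ℝ X) 1) := by
    refine ⟨1, ?_⟩
    rintro _ ⟨a, ha, rfl⟩
    calc Metric.infDist a (V : Set (StrongDual ℝ X)) ≤ dist a 0 := Metric.infDist_le_dist_of_mem h0V
    _ ≤ 1 := Metric.mem_closedBall.mp ha
  have hr_le : ∀ g : StrongDual ℝ X, ‖g‖ ≤ 1 → Metric.infDist g (V : Set (StrongDual ℝ X)) ≤ r := by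
    intro g hg
    exact le_csSup hbddr ⟨g, by simpa [Metric.mem_closedBall, dist_zero_right] using hg, rfl⟩
  have hr0 : 0 ≤ r := by
    have h0 : Metric.infDist (0 : StrongDual ℝ X) (V : Set (StrongDual ℝ X)) ≤ r :=
      hr_le 0 (by simp)
    exact le_trans (by simp [Metric.infDist_zero_of_mem h0V]) h0
  have hRHS0 : 0 ≤ (K + 1) * r := mul_nonneg (by linarith) hr0
  -- main bound
  apply Real.sSup_le _ hRHS0
  rintro c ⟨u, hu, rfl⟩
  rcases Set.eq_empty_or_nonempty (wclust u) with hcl | ⟨z, hz⟩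
  · have : {d : ℝ | ∃ a ∈ wclust u, ∃ b ∈ Set.range j, d = dist a b} = ∅ := by
      simp [hcl]
    rw [setDist, this, Real.sInf_empty]
    exact hRHS0
  -- z is a weak* cluster point
  have hun : ∀ n, ‖u n‖ ≤ 1 := fun n => mem_closedBall_zero_iff.mp (hu n)
  -- ‖z‖ ≤ 1
  have hz1 : ‖z‖ ≤ 1 := by
    refine ContinuousLinearMap.opNorm_le_bound z zero_le_one ?_
    intro g
    rw [one_mul]
    have hcont : ContinuousAt (fun w : WeakDual ℝ (StrongDual ℝ X) => w g)
        (StrongDual.toWeakDual z) := (WeakDual.eval_continuous g).continuousAt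
    have hcp : ClusterPt (z g)
        (Filter.map (fun n => (j (u n)) g) Filter.atTop) := by
      have := (hz.map hcont Filter.tendsto_map)
      exact this
    have hmem : ∀ n, (j (u n)) g ∈ Metric.closedBall (0 : ℝ) ‖g‖ := by
      intro n
      simp only [Metric.mem_closedBall, dist_zero_right]
      calc ‖(j (u n)) g‖ = ‖g (u n)‖ := rfl
        _ ≤ ‖g‖ * ‖u n‖ := g.le_opNorm _
        _ ≤ ‖g‖ * 1 := by
            exact mul_le_mul_of_nonneg_left (hun n) (norm_nonneg _)
        _ = ‖g‖ := mul_one _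
    have : z g ∈ Metric.closedBall (0 : ℝ) ‖g‖ := by
      have hle : Filter.map (fun n => (j (u n)) g) Filter.atTop ≤
          Filter.principal (Metric.closedBall (0 : ℝ) ‖g‖) := by
        rw [Filter.le_principal_iff, Filter.mem_map]
        exact Filter.univ_mem' hmem
      have := hcp.mono hle
      rwa [← mem_closure_iff_clusterPt,
        IsClosed.closure_eq Metric.isClosed_closedBall] at this
    simpa [Metric.mem_closedBall, dist_zero_right] using this
  -- the candidate coefficients
  set a : ℕ → ℝ := fun i => z (f i) with ha
  -- partial sums bounded by K
  have hsum : ∀ n, ‖∑ i ∈ Finset.range n, a i • x i‖ ≤ K := by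
    intro n
    refine norm_le_dual_bound ℝ _ hK0 ?_
    intro g
    have hkey : g.comp (basisProj x f n) = ∑ i ∈ Finset.range n, g (x i) • f i := by
      ext v
      simp [basisProj, ContinuousLinearMap.sum_apply, Finset.mul_sum, mul_comm]
    have heq : g (∑ i ∈ Finset.range n, a i • x i) = z (g.comp (basisProj x f n)) := by
      rw [hkey, map_sum, map_sum]
      simp only [ContinuousLinearMap.coe_smul', Pi.smul_apply, smul_eq_mul, map_smul]
      exact Finset.sum_congr rfl fun i _ => mul_comm _ _
    rw [heq]
    calc ‖z (g.comp (basisProj x f n))‖ ≤ ‖z‖ * ‖g.comp (basisProj x f n)‖ :=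
          z.le_opNorm _
      _ ≤ 1 * (‖g‖ * ‖basisProj x f n‖) :=
          mul_le_mul hz1 (ContinuousLinearMap.opNorm_comp_le _ _) (norm_nonneg _) zero_le_one
      _ = ‖basisProj x f n‖ * ‖g‖ := by ring
      _ ≤ K * ‖g‖ := mul_le_mul_of_nonneg_right (hKge n) (norm_nonneg _)
  obtain ⟨v, hv⟩ := hbdd a ⟨K, hsum⟩
  have hval : ∀ i, a i = f i v := hb.unique a v hv
  have hvK : ‖v‖ ≤ K := by
    have := hv.norm
    exact le_of_tendsto this (Filter.Eventually.of_forall hsum)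
  -- D = z - j v vanishes on V
  set D : StrongDual ℝ (StrongDual ℝ X) := z - j v with hD
  have hjv : ∀ g : StrongDual ℝ X, (j v) g = g v := fun g => rfl
  have hDf : ∀ i, D (f i) = 0 := by
    intro i
    simp only [hD, ContinuousLinearMap.sub_apply, hjv]
    rw [← hval i]
    simp [ha]
  have hDV : ∀ g ∈ (V : Set (StrongDual ℝ X)), D g = 0 := by
    have hsub : V ≤ LinearMap.ker (D : StrongDual ℝ X →ₗ[ℝ] ℝ) := by
      rw [hV]
      unfold dualSpan
      refine Submodule.topologicalClosure_minimal _ ?_ (ContinuousLinearMap.isClosed_ker D)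
      rw [Submodule.span_le]
      rintro _ ⟨i, rfl⟩
      exact LinearMap.mem_ker.mpr (hDf i)
    intro g hg
    exact hsub hg
  have hjvnorm : ‖j v‖ = ‖v‖ := (inclusionInDoubleDualLi ℝ (E := X)).norm_map v
  have hDle : ‖D‖ ≤ K + 1 := by
    calc ‖D‖ ≤ ‖z‖ + ‖j v‖ := by rw [hD]; exact norm_sub_le z (j v)
      _ ≤ 1 + K := by rw [hjvnorm]; exact add_le_add hz1 hvK
      _ = K + 1 := by ring
  have hKp : (0 : ℝ) < K + 1 := by linarith
  have hDnorm : ‖D‖ ≤ (K + 1) * r := by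
    refine ContinuousLinearMap.opNorm_le_of_unit_norm hRHS0 ?_
    intro g hg
    refine le_of_forall_pos_le_add ?_
    intro ε hε
    have hinf : Metric.infDist g (V : Set (StrongDual ℝ X)) < r + ε / (K + 1) := by
      have := hr_le g (le_of_eq hg)
      have : Metric.infDist g (V : Set (StrongDual ℝ X)) ≤ r := this
      linarith [div_pos hε hKp]
    obtain ⟨h, hhV, hgh⟩ := (Metric.infDist_lt_iff hVne).mp hinf
    have hDg : D g = D (g - h) := by
      rw [map_sub, hDV h hhV, sub_zero]
    calc ‖D g‖ = ‖D (g - h)‖ := by rw [hDg]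
      _ ≤ ‖D‖ * ‖g - h‖ := D.le_opNorm _
      _ ≤ (K + 1) * (r + ε / (K + 1)) := by
          refine mul_le_mul hDle ?_ (norm_nonneg _) (le_of_lt hKp)
          rw [← dist_eq_norm]
          exact le_of_lt hgh
      _ = (K + 1) * r + ε := by
          rw [mul_add, mul_div_cancel₀ _ (ne_of_gt hKp)]
  -- conclude
  have hmem : dist z (j v) ∈ {d : ℝ | ∃ a ∈ wclust u, ∃ b ∈ Set.range j, d = dist a b} :=
    ⟨z, hz, j v, ⟨v, rfl⟩, rfl⟩
  have hbb : BddBelow {d : ℝ | ∃ a ∈ wclust u, ∃ b ∈ Set.range j, d = dist a b} := by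
    refine ⟨0, ?_⟩
    rintro d ⟨a, _, b, _, rfl⟩
    exact dist_nonneg
  calc setDist (wclust u) (Set.range j) ≤ dist z (j v) := csInf_le hbb hmem
    _ = ‖D‖ := by rw [hD]; exact dist_eq_norm z (j v)
    _ ≤ (K + 1) * r := hDnorm
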